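/- Let Q be a finite quiver whose vertex set Q₀ has at least two elements, and suppose there exists α : Q₀ → ℤ with α i ≥ 1 for every vertex i and (e_i, α) ≤ −1 for every vertex i. Then the set of all β : Q₀ → ℤ such that β i ≥ 1 for every i, (e_i, β) ≤ −1 for every i, and the greatest common divisor of the values {β i : i ∈ Q₀} equals 1, is an infinite set. -/

import Mathlib

/-- The symmetrized Euler (Tits) form of a finite quiver with vertex set `V`,
arrow set `E`, and head and tail maps `h t : E → V`. -/
def titsForm {V E : Type} [Fintype V] [Fintype E] (h t : E → V) (α β : V → ℤ) : ℤ :=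
  2 * ∑ i, α i * β i - ∑ a, (α (t a) * β (h a) + α (h a) * β (t a))

/-- The coordinate vector `e_i`. -/
def unitVec {V : Type} [DecidableEq V] (i : V) : V → ℤ := fun j => if j = i then 1 else 0

lemma titsForm_comb {V E : Type} [Fintype V] [Fintype E] (h t : E → V)
    (γ β δ : V → ℤ) (c : ℤ) :
    titsForm h t γ (fun k => c * β k + δ k)
      = c * titsForm h t γ β + titsForm h t γ δ := by
  unfold titsForm
  rw [show (∑ i, γ i * (c * β i + δ i)) = c * ∑ i, γ i * β i + ∑ i, γ i * δ i from by
    rw [Finset.mul_sum, ← Finset.sum_add_distrib]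
    exact Finset.sum_congr rfl fun i _ => by ring]
  rw [show (∑ a, (γ (t a) * (c * β (h a) + δ (h a)) + γ (h a) * (c * β (t a) + δ (t a))))
      = c * (∑ a, (γ (t a) * β (h a) + γ (h a) * β (t a)))
        + ∑ a, (γ (t a) * δ (h a) + γ (h a) * δ (t a)) from by
    rw [Finset.mul_sum, ← Finset.sum_add_distrib]
    exact Finset.sum_congr rfl fun a _ => by ring]
  ring

lemma titsForm_unit_le {V E : Type} [Fintype V] [Fintype E] [DecidableEq V]
    (h t : E → V) (i j : V) : titsForm h t (unitVec i) (unitVec j) ≤ 2 := by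
  unfold titsForm unitVec
  have h1 : (∑ k, (if k = i then (1:ℤ) else 0) * (if k = j then 1 else 0)) ≤ 1 := by
    calc (∑ k, (if k = i then (1:ℤ) else 0) * (if k = j then 1 else 0))
        ≤ ∑ k, (if k = i then (1:ℤ) else 0) :=
          Finset.sum_le_sum (fun k _ => by split_ifs <;> norm_num)
      _ = 1 := by simp
  have h2 : (0:ℤ) ≤ ∑ a, ((if t a = i then (1:ℤ) else 0) * (if h a = j then 1 else 0)
      + (if h a = i then (1:ℤ) else 0) * (if t a = j then 1 else 0)) :=
    Finset.sum_nonneg fun a _ => by split_ifs <;> norm_num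
  linarith

/-- If the quiver has at least two vertices and the interior of the cone `C(Q)` contains a
lattice point, then it contains infinitely many indivisible lattice points. -/
theorem infinite_indivisible_interior {V E : Type} [Fintype V] [Fintype E] [DecidableEq V]
    (h t : E → V) (hV : 1 < Fintype.card V)
    (α : V → ℤ) (hα : ∀ i, 1 ≤ α i) (hαneg : ∀ i, titsForm h t (unitVec i) α ≤ -1) :
    {β : V → ℤ | (∀ i, 1 ≤ β i) ∧ (∀ i, titsForm h t (unitVec i) β ≤ -1) ∧
      Finset.univ.gcd β = 1}.Infinite := by
  obtain ⟨i0, j0, hij⟩ := Fintype.exists_pair_of_one_lt_card hV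
  set A : ℤ := α j0 with hAdef
  have hA : 1 ≤ A := hα j0
  set f : ℕ → (V → ℤ) := fun m k => ((m : ℤ) + 3) * A * α k + unitVec i0 k with hf
  have hN : ∀ m : ℕ, 3 ≤ ((m : ℤ) + 3) * A := by
    intro m
    have : (0:ℤ) ≤ (m : ℤ) := Int.natCast_nonneg m
    nlinarith
  apply Set.infinite_of_injective_forall_mem (f := f)
  · -- injectivity
    intro m m' hmm
    have := congrFun hmm j0
    simp only [hf, unitVec, if_neg (Ne.symm hij)] at this
    have hA0 : A * α j0 ≠ 0 := by nlinarith
    have : ((m : ℤ) + 3) = ((m' : ℤ) + 3) := by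
      have h2 : ((m : ℤ) + 3) * (A * α j0) = ((m' : ℤ) + 3) * (A * α j0) := by
        ring_nf; ring_nf at this; linarith
      exact mul_right_cancel₀ hA0 h2
    have : (m : ℤ) = (m' : ℤ) := by linarith
    exact_mod_cast this
  · -- membership
    intro m
    set N : ℤ := ((m : ℤ) + 3) * A with hNdef
    have hN3 : 3 ≤ N := hN m
    refine ⟨?_, ?_, ?_⟩
    · intro k
      have hk := hα k
      have : N * 1 ≤ N * α k := by nlinarith
      simp only [hf, unitVec]
      split_ifs <;> nlinarith
    · intro i
      have hcomb : titsForm h t (unitVec i) (f m)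
          = N * titsForm h t (unitVec i) α + titsForm h t (unitVec i) (unitVec i0) :=
        titsForm_comb h t (unitVec i) α (unitVec i0) N
      have h1 := hαneg i
      have h2 := titsForm_unit_le h t i i0
      have h3 : N * titsForm h t (unitVec i) α ≤ N * (-1) := by
        apply mul_le_mul_of_nonneg_left h1 (by linarith)
      rw [hcomb]; linarith
    · -- gcd = 1
      have hvi : f m i0 = N * α i0 + 1 := by simp [hf, unitVec, hNdef]
      have hvj : f m j0 = ((m : ℤ) + 3) * A * A := by
        simp [hf, unitVec, if_neg (Ne.symm hij), hAdef]
      have c1 : IsCoprime (N * α i0 + 1) A :=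
        ⟨1, -(((m : ℤ) + 3) * α i0), by rw [hNdef]; ring⟩
      have c2 : IsCoprime (N * α i0 + 1) ((m : ℤ) + 3) :=
        ⟨1, -(A * α i0), by rw [hNdef]; ring⟩
      have hcop : IsCoprime (f m i0) (f m j0) := by
        rw [hvi, hvj]
        exact (c2.mul_right c1).mul_right c1
      set d : ℤ := Finset.univ.gcd (f m) with hd
      have hdi : d ∣ f m i0 := Finset.gcd_dvd (Finset.mem_univ _)
      have hdj : d ∣ f m j0 := Finset.gcd_dvd (Finset.mem_univ _)
      have hu : IsUnit d := hcop.isUnit_of_dvd' hdi hdj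
      have hnn : 0 ≤ d := by
        have := Finset.normalize_gcd (s := Finset.univ) (f := f m)
        rw [← hd] at this
        exact Int.nonneg_of_normalize_eq_self this
      rcases Int.isUnit_iff.mp hu with h1 | h1
      · exact h1
      · omega
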